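/- Let G be a graph admitting an outer k-planar drawing D (a cyclic order of its vertices such that every edge is crossed at most k times), and let u, v be two distinct vertices of G. Then there are at most 2k+3 internally vertex-disjoint paths between u and v in G. -/

import Mathlib

open Function

/-- Position of the lower endpoint of an edge in a circular drawing given by
vertex positions `π`. -/
def elo {V : Type*} (π : V → ℕ) : Sym2 V → ℕ :=
  Sym2.lift ⟨fun a b => min (π a) (π b), fun a b => min_comm (π a) (π b)⟩

/-- Position of the upper endpoint of an edge in a circular drawing. -/
def ehi {V : Type*} (π : V → ℕ) : Sym2 V → ℕ :=
  Sym2.lift ⟨fun a b => max (π a) (π b), fun a b => max_comm (π a) (π b)⟩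

/-- Two edges (or vertex pairs) cross (equivalently, the first pierces the
second) in the circular drawing given by positions `π`:
`i < i' < j < j'` or `i' < i < j' < j`. -/
def ecross {V : Type*} (π : V → ℕ) (e f : Sym2 V) : Prop :=
  (elo π e < elo π f ∧ elo π f < ehi π e ∧ ehi π e < ehi π f) ∨
  (elo π f < elo π e ∧ elo π e < ehi π f ∧ ehi π f < ehi π e)

/-- The number of edges of `G` crossing `e` in the circular drawing `π`. -/
noncomputable def crossNum {V : Type*} (G : SimpleGraph V) (π : V → ℕ)
    (e : Sym2 V) : ℕ :=
  {f | f ∈ G.edgeSet ∧ ecross π e f}.ncard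

/-- `π` is an outer `k`-planar drawing of `G`: an injective assignment of
positions (a circular order) such that every edge crosses at most `k` edges. -/
def IsOuterKPlanar {V : Type*} (G : SimpleGraph V) (k : ℕ) (π : V → ℕ) : Prop :=
  Injective π ∧ ∀ e ∈ G.edgeSet, crossNum G π e ≤ k

namespace OuterKPAux

open SimpleGraph

variable {V : Type*}

lemma elo_mk (π : V → ℕ) (a b : V) : elo π s(a,b) = min (π a) (π b) := rfl

lemma ehi_mk (π : V → ℕ) (a b : V) : ehi π s(a,b) = max (π a) (π b) := rfl

lemma ecross_of_pair (π : V → ℕ) (e : Sym2 V) {c d : V}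
    (hc : elo π e < π c ∧ π c < ehi π e)
    (hd : π d < elo π e ∨ ehi π e < π d) :
    ecross π e s(c,d) := by
  unfold ecross
  rw [elo_mk, ehi_mk]
  omega

/-- A walk starting strictly inside the span of `e` and ending strictly
outside it, avoiding the endpoint positions of `e`, contains an edge
crossing `e`. -/
lemma walk_crosses {G : SimpleGraph V} (π : V → ℕ) (e : Sym2 V) :
    ∀ {x y : V} (W : G.Walk x y),
      (∀ z ∈ W.support, π z ≠ elo π e ∧ π z ≠ ehi π e) →
      (elo π e < π x ∧ π x < ehi π e) →
      (π y < elo π e ∨ ehi π e < π y) →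
      ∃ f ∈ W.edges, ecross π e f := by
  intro x y W
  induction W with
  | nil =>
    intro _ hx hy
    omega
  | @cons a w b h q ih =>
    intro hav hx hy
    by_cases hw : elo π e < π w ∧ π w < ehi π e
    · obtain ⟨f, hf, hcr⟩ := ih (fun z hz => hav z (by simp [Walk.support_cons, hz]))
        hw hy
      exact ⟨f, by simp [Walk.edges_cons, hf], hcr⟩
    · have hwa := hav w (by simp [Walk.support_cons, q.start_mem_support])
      refine ⟨s(a,w), by simp [Walk.edges_cons], ecross_of_pair π e hx (by omega)⟩

/-- Variant of `walk_crosses` with start outside and end inside. -/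
lemma walk_crosses' {G : SimpleGraph V} (π : V → ℕ) (e : Sym2 V)
    {x y : V} (W : G.Walk x y)
    (hav : ∀ z ∈ W.support, π z ≠ elo π e ∧ π z ≠ ehi π e)
    (hx : π x < elo π e ∨ ehi π e < π x)
    (hy : elo π e < π y ∧ π y < ehi π e) :
    ∃ f ∈ W.edges, ecross π e f := by
  obtain ⟨f, hf, hcr⟩ := walk_crosses π e W.reverse
    (fun z hz => hav z (by rw [Walk.support_reverse] at hz; exact List.mem_reverse.mp hz))
    hy hx
  refine ⟨f, ?_, hcr⟩
  rw [Walk.edges_reverse] at hf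
  exact List.mem_reverse.mp hf

/-- If a walk contains a vertex satisfying `Q` (as head) and a vertex not
satisfying `Q`, it has an edge from a `Q`-vertex to a non-`Q`-vertex. -/
lemma exists_transition_head {G : SimpleGraph V} (Q : V → Prop) :
    ∀ {a b : V} (W : G.Walk a b) (y : V), y ∈ W.support → Q a → ¬ Q y →
      ∃ c d, s(c,d) ∈ W.edges ∧ Q c ∧ ¬ Q d := by
  classical
  intro a b W
  induction W with
  | nil =>
    intro y hy hQ hny
    simp [Walk.support_nil] at hy
    subst hy; exact absurd hQ hny
  | @cons a w b h q ih =>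
    intro y hy hQa hny
    by_cases hQw : Q w
    · have hy' : y ∈ q.support := by
        rw [Walk.support_cons] at hy
        rcases List.mem_cons.mp hy with rfl | hm
        · exact absurd hQa hny
        · exact hm
      obtain ⟨c, d, hm, h1, h2⟩ := ih y hy' hQw hny
      exact ⟨c, d, by simp [Walk.edges_cons, hm], h1, h2⟩
    · exact ⟨a, w, by simp [Walk.edges_cons], hQa, hQw⟩

lemma exists_transition {G : SimpleGraph V} (Q : V → Prop) {a b : V}
    (W : G.Walk a b) (x y : V) (hx : x ∈ W.support) (hy : y ∈ W.support)
    (hQx : Q x) (hny : ¬ Q y) :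
    ∃ c d, s(c,d) ∈ W.edges ∧ Q c ∧ ¬ Q d := by
  classical
  by_cases hQa : Q a
  · exact exists_transition_head Q W y hy hQa hny
  · obtain ⟨c, d, hm, h1, h2⟩ :=
      exists_transition_head (fun z => ¬ Q z) W x hx hQa (not_not.mpr hQx)
    exact ⟨d, c, by rwa [Sym2.eq_swap], not_not.mp h2, h1⟩

/-- A path from `v` to `v` is trivial. -/
lemma loop_eq_nil {G : SimpleGraph V} {v : V} (p : G.Walk v v) (hp : p.IsPath) :
    p = Walk.nil := by
  cases p with
  | nil => rfl
  | cons h q =>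
    exfalso
    have h2 := hp.support_nodup
    rw [Walk.support_cons, List.nodup_cons] at h2
    exact h2.1 q.end_mem_support

/-- A path from `u` to `v` containing the edge `uv` is the single edge. -/
lemma eq_cons_of_uv_mem {G : SimpleGraph V} {u v : V} (huv : u ≠ v)
    (p : G.Walk u v) (hp : p.IsPath) (he : s(u,v) ∈ p.edges) :
    ∃ h : G.Adj u v, p = Walk.cons h Walk.nil := by
  cases p with
  | nil => exact absurd rfl huv
  | @cons _ w _ h q =>
    by_cases hwv : w = v
    · subst hwv
      exact ⟨h, by rw [loop_eq_nil q hp.of_cons]⟩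
    · exfalso
      rw [Walk.edges_cons] at he
      rcases List.mem_cons.mp he with heq | hmem
      · exact hwv (Sym2.congr_right.mp heq).symm
      · have hu : u ∈ q.support := Walk.fst_mem_support_of_mem_edges q hmem
        have h2 := hp.support_nodup
        rw [Walk.support_cons, List.nodup_cons] at h2
        exact h2.1 hu

/-- A path from `u` to `v` with no internal vertex is the single edge. -/
lemma eq_cons_of_direct {G : SimpleGraph V} {u v : V} (huv : u ≠ v)
    (p : G.Walk u v) (hp : p.IsPath)
    (hd : ∀ x ∈ p.support, x = u ∨ x = v) :
    ∃ h : G.Adj u v, p = Walk.cons h Walk.nil := by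
  cases p with
  | nil => exact absurd rfl huv
  | @cons _ w _ h q =>
    have hw : w ∈ (Walk.cons h q).support := by
      rw [Walk.support_cons]
      exact List.mem_cons.mpr (Or.inr q.start_mem_support)
    rcases hd w hw with rfl | rfl
    · exact absurd rfl h.ne
    · exact ⟨h, by rw [loop_eq_nil q hp.of_cons]⟩

/-- Decomposition of a non-direct path: its second vertex is internal. -/
lemma nondirect_cons {G : SimpleGraph V} {u v : V} (huv : u ≠ v)
    (p : G.Walk u v) (hp : p.IsPath)
    (hnd : ¬ ∀ x ∈ p.support, x = u ∨ x = v) :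
    ∃ (w : V) (h : G.Adj u w) (q : G.Walk w v),
      p = Walk.cons h q ∧ w ≠ u ∧ w ≠ v := by
  cases p with
  | nil => exact absurd rfl huv
  | @cons _ w _ h q =>
    refine ⟨w, h, q, rfl, ?_, ?_⟩
    · intro hwu
      have h2 := hp.support_nodup
      rw [Walk.support_cons, List.nodup_cons] at h2
      exact h2.1 (hwu ▸ q.start_mem_support)
    · intro hwv
      subst hwv
      apply hnd
      intro x hx
      rw [loop_eq_nil q hp.of_cons] at hx
      rw [Walk.support_cons, Walk.support_nil] at hx
      rcases List.mem_cons.mp hx with rfl | hx'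
      · exact Or.inl rfl
      · simp at hx'
        exact Or.inr hx'

/-- The counting lemma: if each path in `S` contains an edge crossing `e`,
then `|S| ≤ k`. -/
lemma count_le {V : Type*} [Fintype V] {G : SimpleGraph V} {k : ℕ} {π : V → ℕ}
    (hD : IsOuterKPlanar G k π) {u v : V} (huv : u ≠ v) {m : ℕ}
    {P : Fin m → G.Walk u v}
    (hpath : ∀ i, (P i).IsPath) (hinj : Function.Injective P)
    (hdisj : ∀ i j, i ≠ j → ∀ x, x ∈ (P i).support → x ∈ (P j).support →
      x = u ∨ x = v)
    (e : Sym2 V) (he : e ∈ G.edgeSet) (S : Finset (Fin m))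
    (hS : ∀ j ∈ S, ∃ f ∈ (P j).edges, ecross π e f) :
    S.card ≤ k := by
  classical
  have hfin : {f | f ∈ G.edgeSet ∧ ecross π e f}.Finite := Set.toFinite _
  set F : Fin m → Sym2 V :=
    fun j => if h : ∃ f ∈ (P j).edges, ecross π e f then h.choose else s(u,u)
    with hF
  have hmem : ∀ j ∈ S, F j ∈ (P j).edges ∧ ecross π e (F j) := by
    intro j hj
    have h := hS j hj
    simp only [hF, dif_pos h]
    exact h.choose_spec
  have key : ∀ j ∈ S, ∀ j' ∈ S, F j = F j' → j = j' := by
    intro j hj j' hj' heq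
    by_contra hne
    obtain ⟨h1, hc1⟩ := hmem j hj
    obtain ⟨h2, hc2⟩ := hmem j' hj'
    rw [heq] at h1
    revert h1 h2
    generalize F j' = f
    intro h1 h2
    induction f using Sym2.ind with
    | _ a b =>
      have hadj : G.Adj a b := (P j').edges_subset_edgeSet h2
      have hab : a ≠ b := hadj.ne
      have ha1 : a ∈ (P j).support := Walk.fst_mem_support_of_mem_edges _ h1
      have hb1 : b ∈ (P j).support := Walk.snd_mem_support_of_mem_edges _ h1
      have ha2 : a ∈ (P j').support := Walk.fst_mem_support_of_mem_edges _ h2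
      have hb2 : b ∈ (P j').support := Walk.snd_mem_support_of_mem_edges _ h2
      have huv1 : s(u,v) ∈ (P j).edges ∧ s(u,v) ∈ (P j').edges := by
        rcases hdisj j j' hne a ha1 ha2 with rfl | rfl <;>
          rcases hdisj j j' hne b hb1 hb2 with rfl | rfl
        · exact absurd rfl hab
        · exact ⟨h1, h2⟩
        · rw [Sym2.eq_swap] at h1 h2
          exact ⟨h1, h2⟩
        · exact absurd rfl hab
      obtain ⟨hA, hPj⟩ := eq_cons_of_uv_mem huv (P j) (hpath j) huv1.1
      obtain ⟨hA', hPj'⟩ := eq_cons_of_uv_mem huv (P j') (hpath j') huv1.2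
      exact hne (hinj (hPj.trans hPj'.symm))
  have hcard : S.card ≤ hfin.toFinset.card := by
    apply Finset.card_le_card_of_injOn F
    · intro j hj
      rw [Finset.mem_coe, Set.Finite.mem_toFinset]
      exact ⟨(P j).edges_subset_edgeSet (hmem j hj).1, (hmem j hj).2⟩
    · intro j hj j' hj' heq
      exact key j hj j' hj' heq
  calc S.card ≤ hfin.toFinset.card := hcard
    _ = crossNum G π e := by
        rw [crossNum, Set.ncard_eq_toFinset_card _ hfin]
    _ ≤ k := hD.2 e he

end OuterKPAux

open OuterKPAux SimpleGraph in
theorem stmt4_aux {V : Type*} [Fintype V] (G : SimpleGraph V) (k : ℕ)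
    (π : V → ℕ) (hD : IsOuterKPlanar G k π)
    (u v : V) (huv : u ≠ v) (hst : π u < π v) (m : ℕ) (P : Fin m → G.Walk u v)
    (hpath : ∀ i, (P i).IsPath) (hinj : Function.Injective P)
    (hdisj : ∀ i j, i ≠ j → ∀ x, x ∈ (P i).support → x ∈ (P j).support →
      x = u ∨ x = v) :
    m ≤ 2 * k + 3 := by
  classical
  have hπ := hD.1
  -- `Dir j`: the path `j` has no internal vertex.
  set Dir : Fin m → Prop := fun j => ∀ x ∈ (P j).support, x = u ∨ x = v with hDir
  -- positions of internal vertices differ from those of `u`, `v`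
  have hne_pos : ∀ (x : V), x ≠ u → x ≠ v → π x ≠ π u ∧ π x ≠ π v := by
    intro x hxu hxv
    exact ⟨fun h => hxu (hπ h), fun h => hxv (hπ h)⟩
  by_cases hmix : ∃ (j : Fin m) (x y : V),
      (x ∈ (P j).support ∧ x ≠ u ∧ x ≠ v ∧ (π u < π x ∧ π x < π v)) ∧
      (y ∈ (P j).support ∧ y ≠ u ∧ y ≠ v ∧ ¬ (π u < π y ∧ π y < π v))
  · -- Mixed case: some path has internal vertices on both sides.
    obtain ⟨j, x, y, ⟨hxs, hxu, hxv, hxQ⟩, ⟨hys, hyu, hyv, hyQ⟩⟩ := hmix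
    have hndj : ¬ Dir j := by
      intro h
      rcases h x hxs with rfl | rfl
      · exact hxu rfl
      · exact hxv rfl
    obtain ⟨w, hadj, q, hPj, hwu, hwv⟩ := nondirect_cons huv (P j) (hpath j) hndj
    have hqpath : q.IsPath := by
      have := hpath j; rw [hPj] at this; exact this.of_cons
    have hu_nq : u ∉ q.support := by
      have h2 := (hpath j).support_nodup
      rw [hPj, Walk.support_cons, List.nodup_cons] at h2
      exact h2.1
    -- decompose the reverse of q to cut off `v`
    cases hqr : q.reverse with
    | nil => exact absurd rfl hwv
    | @cons _ z _ hadj' r =>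
      -- r : G.Walk z w,  q.reverse = cons hadj' r
      have hv_nr : v ∉ r.support := by
        have h2 := hqpath.reverse.support_nodup
        rw [hqr, Walk.support_cons, List.nodup_cons] at h2
        exact h2.1
      have hr_sub : ∀ z' ∈ r.support, z' ∈ q.support := by
        intro z' hz'
        have : z' ∈ q.reverse.support := by
          rw [hqr, Walk.support_cons]; exact List.mem_cons.mpr (Or.inr hz')
        rw [Walk.support_reverse] at this
        exact List.mem_reverse.mp this
      have hr_int : ∀ z' ∈ r.support, z' ≠ u ∧ z' ≠ v := by
        intro z' hz'
        exact ⟨fun h => hu_nq (h ▸ hr_sub z' hz'), fun h => hv_nr (h ▸ hz')⟩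
      have hr_supP : ∀ z' ∈ r.support, z' ∈ (P j).support := by
        intro z' hz'
        rw [hPj, Walk.support_cons]
        exact List.mem_cons.mpr (Or.inr (hr_sub z' hz'))
      have hxr : x ∈ r.support := by
        have hxq : x ∈ q.support := by
          have := hxs; rw [hPj, Walk.support_cons] at this
          rcases List.mem_cons.mp this with rfl | h
          · exact absurd rfl hxu
          · exact h
        have : x ∈ q.reverse.support := by
          rw [Walk.support_reverse]; exact List.mem_reverse.mpr hxq
        rw [hqr, Walk.support_cons] at this
        rcases List.mem_cons.mp this with rfl | h
        · exact absurd rfl hxv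
        · exact h
      have hyr : y ∈ r.support := by
        have hyq : y ∈ q.support := by
          have := hys; rw [hPj, Walk.support_cons] at this
          rcases List.mem_cons.mp this with rfl | h
          · exact absurd rfl hyu
          · exact h
        have : y ∈ q.reverse.support := by
          rw [Walk.support_reverse]; exact List.mem_reverse.mpr hyq
        rw [hqr, Walk.support_cons] at this
        rcases List.mem_cons.mp this with rfl | h
        · exact absurd rfl hyv
        · exact h
      obtain ⟨c, d, hcd, hQc, hQd⟩ :=
        exists_transition (fun z' => π u < π z' ∧ π z' < π v) r x y hxr hyr hxQ hyQ
      have hcr : c ∈ r.support := Walk.fst_mem_support_of_mem_edges _ hcd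
      have hdr : d ∈ r.support := Walk.snd_mem_support_of_mem_edges _ hcd
      have hcint := hr_int c hcr
      have hdint := hr_int d hdr
      have hdpos : π d < π u ∨ π v < π d := by
        have h1 := hne_pos d hdint.1 hdint.2
        omega
      have hcdP : s(c,d) ∈ (P j).edges := by
        have h1 : s(c,d) ∈ q.reverse.edges := by
          rw [hqr, Walk.edges_cons]; exact List.mem_cons.mpr (Or.inr hcd)
        rw [Walk.edges_reverse] at h1
        rw [hPj, Walk.edges_cons]
        exact List.mem_cons.mpr (Or.inr (List.mem_reverse.mp h1))
      have hcdE : s(c,d) ∈ G.edgeSet := (P j).edges_subset_edgeSet hcdP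
      -- every other path crosses s(c,d)
      have hS : ∀ j' ∈ (Finset.univ : Finset (Fin m)).erase j,
          ∃ f ∈ (P j').edges, ecross π s(c,d) f := by
        intro j' hj'
        have hne : j' ≠ j := Finset.ne_of_mem_erase hj'
        have hav : ∀ z' ∈ (P j').support,
            π z' ≠ elo π s(c,d) ∧ π z' ≠ ehi π s(c,d) := by
          intro z' hz'
          have hzc : z' ≠ c := by
            intro h
            rcases hdisj j' j hne z' hz' (h ▸ hr_supP c hcr) with rfl | rfl
            · exact hcint.1 h.symm
            · exact hcint.2 h.symm
          have hzd : z' ≠ d := by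
            intro h
            rcases hdisj j' j hne z' hz' (h ▸ hr_supP d hdr) with rfl | rfl
            · exact hdint.1 h.symm
            · exact hdint.2 h.symm
          rw [elo_mk, ehi_mk]
          have h1 : π z' ≠ π c := fun h => hzc (hπ h)
          have h2 : π z' ≠ π d := fun h => hzd (hπ h)
          omega
        rcases hdpos with hd1 | hd1
        · -- d left of u : u strictly inside, v strictly outside
          have helo : elo π s(c,d) = π d := by rw [elo_mk]; omega
          have hehi : ehi π s(c,d) = π c := by rw [ehi_mk]; omega
          exact walk_crosses π s(c,d) (P j') hav (by omega) (by omega)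
        · -- d right of v : v strictly inside, u strictly outside
          have helo : elo π s(c,d) = π c := by rw [elo_mk]; omega
          have hehi : ehi π s(c,d) = π d := by rw [ehi_mk]; omega
          exact walk_crosses' π s(c,d) (P j') hav (by omega) (by omega)
      have hcount := count_le hD huv hpath hinj hdisj s(c,d) hcdE _ hS
      have h1 : ((Finset.univ : Finset (Fin m)).erase j).card =
          m - 1 := by
        rw [Finset.card_erase_of_mem (Finset.mem_univ j), Finset.card_univ,
          Fintype.card_fin]
      have hm : 1 ≤ m := by
        have : j.val < m := j.isLt
        omega
      omega
  · -- No mixed path.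
    set A : Finset (Fin m) := Finset.univ.filter (fun j => ¬ Dir j ∧
      ∀ x ∈ (P j).support, x ≠ u → x ≠ v → (π u < π x ∧ π x < π v)) with hA
    set B : Finset (Fin m) := Finset.univ.filter (fun j => ¬ Dir j ∧
      ∀ x ∈ (P j).support, x ≠ u → x ≠ v → ¬ (π u < π x ∧ π x < π v)) with hB
    set D : Finset (Fin m) := Finset.univ.filter Dir with hDset
    -- covering
    have hcover : (Finset.univ : Finset (Fin m)) ⊆ D ∪ A ∪ B := by
      intro j _
      by_cases hd : Dir j
      · exact Finset.mem_union_left _ (Finset.mem_union_left _ (by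
          rw [hDset, Finset.mem_filter]; exact ⟨Finset.mem_univ _, hd⟩))
      by_cases hin : ∀ x ∈ (P j).support, x ≠ u → x ≠ v → (π u < π x ∧ π x < π v)
      · exact Finset.mem_union_left _ (Finset.mem_union_right _ (by
          rw [hA, Finset.mem_filter]; exact ⟨Finset.mem_univ _, hd, hin⟩))
      · have hout : ∀ x ∈ (P j).support, x ≠ u → x ≠ v →
            ¬ (π u < π x ∧ π x < π v) := by
          intro x hx1 hx2 hx3 hx4
          push_neg at hin
          obtain ⟨y, hy1, hy2, hy3, hy4⟩ := hin
          have hy4' : ¬ (π u < π y ∧ π y < π v) := by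
            intro hc
            have := hy4 hc.1
            omega
          exact hmix ⟨j, x, y, ⟨hx1, hx2, hx3, hx4⟩, ⟨hy1, hy2, hy3, hy4'⟩⟩
        exact Finset.mem_union_right _ (by
          rw [hB, Finset.mem_filter]; exact ⟨Finset.mem_univ _, hd, hout⟩)
    -- direct paths: at most one
    have hDcard : D.card ≤ 1 := by
      rw [Finset.card_le_one]
      intro j hj j' hj'
      rw [hDset, Finset.mem_filter] at hj hj'
      obtain ⟨h1, hPj⟩ := eq_cons_of_direct huv (P j) (hpath j) hj.2
      obtain ⟨h2, hPj'⟩ := eq_cons_of_direct huv (P j') (hpath j') hj'.2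
      exact hinj (hPj.trans hPj'.symm)
    -- inner paths: at most k+1
    have hAcard : A.card ≤ k + 1 := by
      rcases A.eq_empty_or_nonempty with hAe | hAne
      · rw [hAe]; simp
      obtain ⟨Bm, hBm, hmax⟩ :=
        A.exists_max_image (fun j => π ((P j).getVert 1)) hAne
      have hBmA := hBm
      rw [hA, Finset.mem_filter] at hBmA
      obtain ⟨wB, hadjB, qB, hPB, hwBu, hwBv⟩ :=
        nondirect_cons huv (P Bm) (hpath Bm) hBmA.2.1
      have hsecB : (P Bm).getVert 1 = wB := by
        rw [hPB, Walk.getVert_cons_succ, Walk.getVert_zero]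
      have hwBs : wB ∈ (P Bm).support := by
        rw [hPB, Walk.support_cons]
        exact List.mem_cons.mpr (Or.inr qB.start_mem_support)
      have hQwB : π u < π wB ∧ π wB < π v := hBmA.2.2 wB hwBs hwBu hwBv
      have heB : s(u, wB) ∈ (P Bm).edges := by
        rw [hPB, Walk.edges_cons]; exact List.mem_cons.mpr (Or.inl rfl)
      have heBE : s(u, wB) ∈ G.edgeSet := (P Bm).edges_subset_edgeSet heB
      have helo : elo π s(u, wB) = π u := by rw [elo_mk]; omega
      have hehi : ehi π s(u, wB) = π wB := by rw [ehi_mk]; omega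
      have hS : ∀ j ∈ A.erase Bm, ∃ f ∈ (P j).edges, ecross π s(u, wB) f := by
        intro j hj
        have hne : j ≠ Bm := Finset.ne_of_mem_erase hj
        have hjA := Finset.mem_of_mem_erase hj
        have hjA' := hjA
        rw [hA, Finset.mem_filter] at hjA'
        obtain ⟨wj, hadjj, qj, hPj, hwju, hwjv⟩ :=
          nondirect_cons huv (P j) (hpath j) hjA'.2.1
        have hsecj : (P j).getVert 1 = wj := by
          rw [hPj, Walk.getVert_cons_succ, Walk.getVert_zero]
        have hwjs : wj ∈ (P j).support := by
          rw [hPj, Walk.support_cons]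
          exact List.mem_cons.mpr (Or.inr qj.start_mem_support)
        have hQwj : π u < π wj ∧ π wj < π v := hjA'.2.2 wj hwjs hwju hwjv
        have hwjB : wj ≠ wB := by
          intro h
          rcases hdisj j Bm hne wj hwjs (h ▸ hwBs) with rfl | rfl
          · exact hwju rfl
          · exact hwjv rfl
        have hlt : π wj < π wB := by
          have := hmax j hjA
          rw [hsecj, hsecB] at this
          have : π wj ≤ π wB := this
          have hne2 : π wj ≠ π wB := fun h => hwjB (hπ h)
          omega
        have hu_nq : u ∉ qj.support := by
          have h2 := (hpath j).support_nodup
          rw [hPj, Walk.support_cons, List.nodup_cons] at h2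
          exact h2.1
        have hav : ∀ z ∈ qj.support,
            π z ≠ elo π s(u, wB) ∧ π z ≠ ehi π s(u, wB) := by
          intro z hz
          have hzu : z ≠ u := fun h => hu_nq (h ▸ hz)
          have hzP : z ∈ (P j).support := by
            rw [hPj, Walk.support_cons]; exact List.mem_cons.mpr (Or.inr hz)
          have hzwB : z ≠ wB := by
            intro h
            rcases hdisj j Bm hne z hzP (h ▸ hwBs) with rfl | rfl
            · exact hzu rfl
            · exact hwBv h.symm
          rw [helo, hehi]
          exact ⟨fun h => hzu (hπ h), fun h => hzwB (hπ h)⟩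
        obtain ⟨f, hf, hcr⟩ := walk_crosses π s(u, wB) qj hav
          (by rw [helo, hehi]; omega) (by rw [helo, hehi]; omega)
        refine ⟨f, ?_, hcr⟩
        rw [hPj, Walk.edges_cons]
        exact List.mem_cons.mpr (Or.inr hf)
      have hcount := count_le hD huv hpath hinj hdisj s(u, wB) heBE _ hS
      have h1 : (A.erase Bm).card = A.card - 1 := Finset.card_erase_of_mem hBm
      have h2 : 1 ≤ A.card := Finset.card_pos.mpr hAne
      omega
    -- outer paths: at most k+1
    have hBcard : B.card ≤ k + 1 := by
      -- decomposition data for each outer path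
      have hdec : ∀ j ∈ B, ∃ (z : V) (h : G.Adj v z) (r : G.Walk z u),
          (P j).reverse = Walk.cons h r ∧ z ≠ v ∧ z ≠ u := by
        intro j hj
        rw [hB, Finset.mem_filter] at hj
        apply nondirect_cons huv.symm (P j).reverse (hpath j).reverse
        intro hall
        apply hj.2.1
        intro x hx
        have : x ∈ (P j).reverse.support := by
          rw [Walk.support_reverse]; exact List.mem_reverse.mpr hx
        rcases hall x this with rfl | rfl
        · exact Or.inr rfl
        · exact Or.inl rfl
      -- basic facts
      have hfacts : ∀ j ∈ B, ∀ (z : V) (h : G.Adj v z) (r : G.Walk z u),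
          (P j).reverse = Walk.cons h r → z ≠ v → z ≠ u →
          ((P j).reverse.getVert 1 = z ∧ z ∈ (P j).support ∧
            (π z < π u ∨ π v < π z) ∧ v ∉ r.support ∧
            (∀ z' ∈ r.support, z' ∈ (P j).support)) := by
        intro j hj z h r hPr hzv hzu
        have hjB := hj
        rw [hB, Finset.mem_filter] at hjB
        have hzs : z ∈ (P j).support := by
          have : z ∈ (P j).reverse.support := by
            rw [hPr, Walk.support_cons]
            exact List.mem_cons.mpr (Or.inr r.start_mem_support)
          rw [Walk.support_reverse] at this
          exact List.mem_reverse.mp this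
        refine ⟨by rw [hPr, Walk.getVert_cons_succ, Walk.getVert_zero], hzs, ?_, ?_, ?_⟩
        · have h1 := hjB.2.2 z hzs hzu hzv
          have h2 := hne_pos z hzu hzv
          omega
        · have h2 := (hpath j).reverse.support_nodup
          rw [hPr, Walk.support_cons, List.nodup_cons] at h2
          exact h2.1
        · intro z' hz'
          have : z' ∈ (P j).reverse.support := by
            rw [hPr, Walk.support_cons]; exact List.mem_cons.mpr (Or.inr hz')
          rw [Walk.support_reverse] at this
          exact List.mem_reverse.mp this
      rcases B.eq_empty_or_nonempty with hBe | hBne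
      · rw [hBe]; simp
      -- choose the extremal outer path
      set Ls : Finset (Fin m) :=
        B.filter (fun j => π ((P j).reverse.getVert 1) < π u) with hLs
      have main : ∀ (Bm : Fin m) (e : Sym2 V), Bm ∈ B →
          (∀ j ∈ B, j ≠ Bm → ∃ f ∈ (P j).edges, ecross π e f) →
          e ∈ G.edgeSet →
          B.card ≤ k + 1 := by
        intro Bm e hBm hall hedge
        have hS : ∀ j ∈ B.erase Bm, ∃ f ∈ (P j).edges, ecross π e f := by
          intro j hj
          exact hall j (Finset.mem_of_mem_erase hj) (Finset.ne_of_mem_erase hj)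
        have hcount := count_le hD huv hpath hinj hdisj _ hedge _ hS
        have h1 : (B.erase Bm).card = B.card - 1 := Finset.card_erase_of_mem hBm
        have h2 : 1 ≤ B.card := Finset.card_pos.mpr hBne
        omega
      by_cases hL : Ls.Nonempty
      · -- some outer path has its penultimate vertex left of u
        obtain ⟨Bm, hBmL, hmax⟩ :=
          Ls.exists_max_image (fun j => π ((P j).reverse.getVert 1)) hL
        have hBmB : Bm ∈ B := Finset.mem_of_mem_filter _ hBmL
        obtain ⟨zB, hadjB, rB, hPrB, hzBv, hzBu⟩ := hdec Bm hBmB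
        obtain ⟨hsecB, hzBs, hzBpos, hvnr, hrsub⟩ :=
          hfacts Bm hBmB zB hadjB rB hPrB hzBv hzBu
        have hzBlt : π zB < π u := by
          have := hBmL
          rw [hLs, Finset.mem_filter, hsecB] at this
          exact this.2
        have helo : elo π s(v, zB) = π zB := by rw [elo_mk]; omega
        have hehi : ehi π s(v, zB) = π v := by rw [ehi_mk]; omega
        have heB : s(v, zB) ∈ (P Bm).edges := by
          have h1 : s(v, zB) ∈ (P Bm).reverse.edges := by
            rw [hPrB, Walk.edges_cons]; exact List.mem_cons.mpr (Or.inl rfl)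
          rw [Walk.edges_reverse] at h1
          exact List.mem_reverse.mp h1
        apply main Bm s(v, zB) hBmB _ ((P Bm).edges_subset_edgeSet heB)
        intro j hjB hne
        obtain ⟨zj, hadjj, rj, hPrj, hzjv, hzju⟩ := hdec j hjB
        obtain ⟨hsecj, hzjs, hzjpos, hvnrj, hrsubj⟩ :=
          hfacts j hjB zj hadjj rj hPrj hzjv hzju
        have hzjB : zj ≠ zB := by
          intro h
          rcases hdisj j Bm hne zj hzjs (h ▸ hzBs) with rfl | rfl
          · exact hzju rfl
          · exact hzjv rfl
        have hzout : π zj < π zB ∨ π v < π zj := by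
          rcases hzjpos with h1 | h1
          · left
            have hjL : j ∈ Ls := by
              rw [hLs, Finset.mem_filter, hsecj]; exact ⟨hjB, h1⟩
            have := hmax j hjL
            rw [hsecj, hsecB] at this
            have hne2 : π zj ≠ π zB := fun h => hzjB (hπ h)
            omega
          · right; exact h1
        have hav : ∀ z' ∈ rj.support,
            π z' ≠ elo π s(v, zB) ∧ π z' ≠ ehi π s(v, zB) := by
          intro z' hz'
          have hzv' : z' ≠ v := fun h => hvnrj (h ▸ hz')
          have hzP : z' ∈ (P j).support := hrsubj z' hz'
          have hzzB : z' ≠ zB := by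
            intro h
            rcases hdisj j Bm hne z' hzP (h ▸ hzBs) with rfl | rfl
            · exact hzBu h.symm
            · exact hzBv h.symm
          rw [helo, hehi]
          exact ⟨fun h => hzzB (hπ h), fun h => hzv' (hπ h)⟩
        -- rj : walk from zj (strictly outside) to u (strictly inside)
        obtain ⟨f, hf, hcr⟩ := walk_crosses' π s(v, zB) rj hav
          (by rw [helo, hehi]; omega) (by rw [helo, hehi]; omega)
        refine ⟨f, ?_, hcr⟩
        have h1 : f ∈ (P j).reverse.edges := by
          rw [hPrj, Walk.edges_cons]; exact List.mem_cons.mpr (Or.inr hf)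
        rw [Walk.edges_reverse] at h1
        exact List.mem_reverse.mp h1
      · -- all outer paths have penultimate vertex right of v
        have hallR : ∀ j ∈ B, ¬ (π ((P j).reverse.getVert 1) < π u) := by
          intro j hj hlt
          exact hL ⟨j, by rw [hLs, Finset.mem_filter]; exact ⟨hj, hlt⟩⟩
        obtain ⟨Bm, hBmB, hmax⟩ :=
          B.exists_max_image (fun j => π ((P j).reverse.getVert 1)) hBne
        obtain ⟨zB, hadjB, rB, hPrB, hzBv, hzBu⟩ := hdec Bm hBmB
        obtain ⟨hsecB, hzBs, hzBpos, hvnr, hrsub⟩ :=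
          hfacts Bm hBmB zB hadjB rB hPrB hzBv hzBu
        have hzBgt : π v < π zB := by
          have := hallR Bm hBmB
          rw [hsecB] at this
          omega
        have helo : elo π s(v, zB) = π v := by rw [elo_mk]; omega
        have hehi : ehi π s(v, zB) = π zB := by rw [ehi_mk]; omega
        have heB : s(v, zB) ∈ (P Bm).edges := by
          have h1 : s(v, zB) ∈ (P Bm).reverse.edges := by
            rw [hPrB, Walk.edges_cons]; exact List.mem_cons.mpr (Or.inl rfl)
          rw [Walk.edges_reverse] at h1
          exact List.mem_reverse.mp h1
        apply main Bm s(v, zB) hBmB _ ((P Bm).edges_subset_edgeSet heB)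
        intro j hjB hne
        obtain ⟨zj, hadjj, rj, hPrj, hzjv, hzju⟩ := hdec j hjB
        obtain ⟨hsecj, hzjs, hzjpos, hvnrj, hrsubj⟩ :=
          hfacts j hjB zj hadjj rj hPrj hzjv hzju
        have hzjgt : π v < π zj := by
          have := hallR j hjB
          rw [hsecj] at this
          omega
        have hzjB : zj ≠ zB := by
          intro h
          rcases hdisj j Bm hne zj hzjs (h ▸ hzBs) with rfl | rfl
          · exact hzju rfl
          · exact hzjv rfl
        have hzjlt : π zj < π zB := by
          have := hmax j hjB
          rw [hsecj, hsecB] at this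
          have hne2 : π zj ≠ π zB := fun h => hzjB (hπ h)
          omega
        have hav : ∀ z' ∈ rj.support,
            π z' ≠ elo π s(v, zB) ∧ π z' ≠ ehi π s(v, zB) := by
          intro z' hz'
          have hzv' : z' ≠ v := fun h => hvnrj (h ▸ hz')
          have hzP : z' ∈ (P j).support := hrsubj z' hz'
          have hzzB : z' ≠ zB := by
            intro h
            rcases hdisj j Bm hne z' hzP (h ▸ hzBs) with rfl | rfl
            · exact hzBu h.symm
            · exact hzBv h.symm
          rw [helo, hehi]
          exact ⟨fun h => hzv' (hπ h), fun h => hzzB (hπ h)⟩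
        -- rj : walk from zj (strictly inside) to u (strictly outside)
        obtain ⟨f, hf, hcr⟩ := walk_crosses π s(v, zB) rj hav
          (by rw [helo, hehi]; omega) (by rw [helo, hehi]; omega)
        refine ⟨f, ?_, hcr⟩
        have h1 : f ∈ (P j).reverse.edges := by
          rw [hPrj, Walk.edges_cons]; exact List.mem_cons.mpr (Or.inr hf)
        rw [Walk.edges_reverse] at h1
        exact List.mem_reverse.mp h1
    -- combine
    have hm : m = (Finset.univ : Finset (Fin m)).card := by
      rw [Finset.card_univ, Fintype.card_fin]
    have h1 := Finset.card_le_card hcover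
    have h2 : (D ∪ A ∪ B).card ≤ D.card + A.card + B.card := by
      calc (D ∪ A ∪ B).card ≤ (D ∪ A).card + B.card := Finset.card_union_le _ _
        _ ≤ D.card + A.card + B.card := by
            have := Finset.card_union_le D A
            omega
    omega

/-- In a graph with an outer `k`-planar drawing there are at most `2k+3`
pairwise internally vertex-disjoint paths between two distinct vertices. -/
theorem stmt4 {V : Type*} [Fintype V] (G : SimpleGraph V) (k : ℕ)
    (π : V → ℕ) (hD : IsOuterKPlanar G k π)
    (u v : V) (huv : u ≠ v) (m : ℕ) (P : Fin m → G.Walk u v)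
    (hpath : ∀ i, (P i).IsPath) (hinj : Function.Injective P)
    (hdisj : ∀ i j, i ≠ j → ∀ x, x ∈ (P i).support → x ∈ (P j).support →
      x = u ∨ x = v) :
    m ≤ 2 * k + 3 := by
  have hne : π u ≠ π v := fun h => huv (hD.1 h)
  rcases lt_or_gt_of_ne hne with hst | hst
  · exact stmt4_aux G k π hD u v huv hst m P hpath hinj hdisj
  · refine stmt4_aux G k π hD v u huv.symm hst m
      (fun i => (P i).reverse) (fun i => (hpath i).reverse) ?_ ?_
    · intro i j h
      apply hinj
      have := congrArg SimpleGraph.Walk.reverse h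
      rwa [SimpleGraph.Walk.reverse_reverse, SimpleGraph.Walk.reverse_reverse]
        at this
    · intro i j hij x hxi hxj
      rw [SimpleGraph.Walk.support_reverse] at hxi hxj
      exact (hdisj i j hij x (List.mem_reverse.mp hxi)
        (List.mem_reverse.mp hxj)).symm
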